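/- Let Z be a non-empty zone, α a bound function, and x a clock different from x₀. Among the regions R with respect to α that intersect Z, the least value of R_{0x} is (<,∞) if Z_{x0} < (≤,−α_x), and ⌈−Z_{x0}⌉ otherwise. -/

import Mathlib

attribute [local instance] Classical.propDecidable

noncomputable section

namespace TAform

/-! ### Weights `(≼, c)` with `c ∈ ℤ ∪ {∞}` -/

/-- Values in `ℤ ∪ {∞}`: `none` represents `∞`. -/
abbrev OVal := Option ℤ

/-- Addition on `ℤ ∪ {∞}`. -/
def ovAdd : OVal → OVal → OVal
  | some a, some b => some (a + b)
  | _, _ => none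

/-- Strict order on `ℤ ∪ {∞}`. -/
def ovLt : OVal → OVal → Prop
  | some a, some b => a < b
  | some _, none => True
  | none, _ => False

/-- A weight `(≼, c)`: `strict = true` means `≼` is `<`, `strict = false` means `≤`;
`val ∈ ℤ ∪ {∞}`. -/
structure Weight where
  strict : Bool
  val : OVal

/-- The weight `(<, ∞)`. -/
def winf : Weight := ⟨true, none⟩

/-- The weight `(≤, c)`. -/
def wle (c : ℤ) : Weight := ⟨false, some c⟩

/-- The weight `(<, c)`. -/
def wlt (c : ℤ) : Weight := ⟨true, some c⟩

/-- Addition: `(≼₁,c₁)+(≼₂,c₂) = (≼,c₁+c₂)` where `≼` is `<` iff `≼₁` or `≼₂` is `<`. -/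
def Weight.add (a b : Weight) : Weight := ⟨a.strict || b.strict, ovAdd a.val b.val⟩

/-- Order: `(≼₁,c₁) < (≼₂,c₂)` iff `c₁ < c₂`, or `c₁ = c₂`, `≼₁` is `<` and `≼₂` is `≤`. -/
def Weight.lt (a b : Weight) : Prop :=
  ovLt a.val b.val ∨ (a.val = b.val ∧ a.strict = true ∧ b.strict = false)

def Weight.le (a b : Weight) : Prop := Weight.lt a b ∨ a = b

/-- Minus: `−(≼,c) = (≼,−c)`. -/
def Weight.neg (w : Weight) : Weight := ⟨w.strict, Option.map (fun c => -c) w.val⟩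

/-- Floor: `⌊(<,c)⌋ = (≤,c−1)` and `⌊(≤,c)⌋ = (≤,c)`. -/
def Weight.floor (w : Weight) : Weight :=
  ⟨false, if w.strict then Option.map (fun c => c - 1) w.val else w.val⟩

/-- Ceiling (on integer-valued weights): `⌈(≤,c)⌉ = (≤,c)` and `⌈(<,c)⌉ = (<,c+1)`. -/
def Weight.ceil (w : Weight) : Weight :=
  if w.strict then ⟨true, Option.map (fun c => c + 1) w.val⟩ else w

/-- Maximum of two weights. -/
def Weight.max (a b : Weight) : Weight := if Weight.lt a b then b else a

/-- Satisfaction: `d ≼ c` for a real number `d` and a weight `(≼,c)`. -/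
def Weight.sat (w : Weight) (d : ℝ) : Prop :=
  match w.val with
  | none => True
  | some c => if w.strict then d < (c : ℝ) else d ≤ (c : ℝ)

/-! ### Distance graphs and their semantics -/

/-- Vertices: clocks of `X` together with the special vertex `x₀` (represented by `none`). -/
abbrev Vtx (X : Type*) := Option X

/-- A distance graph: a weight for every ordered pair of vertices.  The edge
`a →^{≼ c} b` represents the constraint `v b − v a ≼ c`. -/
abbrev DGraph (X : Type*) := Vtx X → Vtx X → Weight

/-- A clock valuation. -/
abbrev Val (X : Type*) := X → ℝ

/-- The valuation is nonnegative (clock valuations map into `ℝ≥0`). -/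
def Nonneg {X : Type*} (v : Val X) : Prop := ∀ x, 0 ≤ v x

/-- Extension of a valuation to all vertices, sending `x₀` to `0`. -/
def extV {X : Type*} (v : Val X) : Vtx X → ℝ
  | none => 0
  | some x => v x

/-- Semantics of a distance graph: the set of nonnegative clock valuations
(with `x₀ = 0`) satisfying all edge constraints. -/
def sem {X : Type*} (G : DGraph X) : Set (Val X) :=
  { v | Nonneg v ∧ ∀ a b, (G a b).sat (extV v b - extV v a) }

/-- Weight of the path `a :: l ++ [b]` in `G` (sum of the weights of its edges). -/
def pathWeight {X : Type*} (G : DGraph X) : Vtx X → List (Vtx X) → Vtx X → Weight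
  | a, [], b => G a b
  | a, c :: l, b => (G a c).add (pathWeight G c l b)

/-- `G` has only positive cycles: no cycle has weight at most `(<,0)`. -/
def OnlyPositiveCycles {X : Type*} (G : DGraph X) : Prop :=
  ∀ (a : Vtx X) (l : List (Vtx X)), ¬ (pathWeight G a l a).le (wlt 0)

/-- Canonical form: the weight of the edge from `a` to `b` is a lower bound of the
weights of all paths from `a` to `b`. -/
def PathCanonical {X : Type*} (G : DGraph X) : Prop :=
  ∀ (a b : Vtx X) (l : List (Vtx X)), (G a b).le (pathWeight G a l b)

/-- The weight `w` bounds the difference `v b − v a` over all `v ∈ S`. -/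
def Bounds {X : Type*} (S : Set (Val X)) (a b : Vtx X) (w : Weight) : Prop :=
  ∀ v ∈ S, w.sat (extV v b - extV v a)

/-- `G` is the canonical distance graph of the set `S`: it represents `S` and each of
its edge weights is the least weight bounding the corresponding difference over `S`
(equivalently, for sets defined by clock constraints, the lower bound of the weights
of paths between its endpoints). -/
def IsCanonGraph {X : Type*} (G : DGraph X) (S : Set (Val X)) : Prop :=
  sem G = S ∧ ∀ a b w, Bounds S a b w → (G a b).le w

/-- A zone: a set of valuations defined by a conjunction of constraints of the form
`x − y # c` or `x # c`, i.e. the set represented by some distance graph. -/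
def IsZone {X : Type*} (Z : Set (Val X)) : Prop := ∃ G : DGraph X, sem G = Z

/-! ### Regions and closure -/

/-- Region equivalence with respect to the bound function `α`: same integer parts
(or both above the bound), same set of clocks with zero fractional part, and the
same ordering of fractional parts of bounded clocks. -/
def regEq {X : Type*} (α : X → ℕ) (v w : Val X) : Prop :=
  (∀ x, ((α x : ℝ) < v x ∧ (α x : ℝ) < w x) ∨
    (⌊v x⌋ = ⌊w x⌋ ∧ (Int.fract (v x) = 0 ↔ Int.fract (w x) = 0))) ∧
  (∀ x y, v x ≤ (α x : ℝ) → v y ≤ (α y : ℝ) →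
    (Int.fract (v x) ≤ Int.fract (v y) ↔ Int.fract (w x) ≤ Int.fract (w y)))

/-- A region with respect to `α`: an equivalence class of region equivalence
(inside the nonnegative valuations). -/
def IsRegion {X : Type*} (α : X → ℕ) (R : Set (Val X)) : Prop :=
  ∃ v : Val X, Nonneg v ∧ R = { w | Nonneg w ∧ regEq α v w }

/-- Closure abstraction: the union of the regions (w.r.t. `α`) intersecting `S`. -/
def Closure {X : Type*} (α : X → ℕ) (S : Set (Val X)) : Set (Val X) :=
  ⋃₀ { R | IsRegion α R ∧ (R ∩ S).Nonempty }

/-! ### LU-bounds and the `Extra⁺_LU` extrapolation -/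

/-- `w > (≤, l)` where `l ∈ ℕ ∪ {−∞}` (`⊥` is `−∞`). -/
def gtLB (w : Weight) (l : WithBot ℕ) : Prop :=
  ∀ n : ℕ, l = (n : WithBot ℕ) → ovLt (some (n : ℤ)) w.val

/-- `−w > (≤, l)` where `l ∈ ℕ ∪ {−∞}`. -/
def negGtLB (w : Weight) (l : WithBot ℕ) : Prop :=
  ∃ c : ℤ, w.val = some c ∧ ∀ n : ℕ, l = (n : WithBot ℕ) → c < -(n : ℤ)

/-- The weight `(<, −u)` for `u ∈ ℕ ∪ {−∞}` (with `(<,∞)` when `u = −∞`). -/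
def wltNeg (u : WithBot ℕ) : Weight :=
  ⟨true, WithBot.recBotCoe none (fun n => some (-(n : ℤ))) u⟩

/-- The `Extra⁺_{LU}` extrapolation, applied edgewise to a distance graph `G`
(the canonical graph of a zone): `Z⁺_{xy} = (<,∞)` if `Z_{xy} > (≤,L_y)`, or
`−Z_{y0} > (≤,L_y)`, or `−Z_{x0} > (≤,U_x)` and `y ≠ x₀`;
`Z⁺_{x0} = (<,−U_x)` if `−Z_{x0} > (≤,U_x)`; and `Z⁺_{xy} = Z_{xy}` otherwise. -/
def extraLU {X : Type*} (L U : X → WithBot ℕ) (G : DGraph X) : DGraph X := fun a b =>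
  match a, b with
  | some x, some y =>
      if gtLB (G (some x) (some y)) (L y) ∨ negGtLB (G (some y) none) (L y) ∨
          negGtLB (G (some x) none) (U x)
      then winf else G (some x) (some y)
  | none, some y =>
      if gtLB (G none (some y)) (L y) ∨ negGtLB (G (some y) none) (L y)
      then winf else G none (some y)
  | some x, none =>
      if negGtLB (G (some x) none) (U x) then wltNeg (U x) else G (some x) none
  | none, none => G none none

/-! ### LU-preorder and its abstraction -/

/-- `l < r` where `l ∈ ℕ ∪ {−∞}` and `r : ℝ`. -/
def lbLtR (l : WithBot ℕ) (r : ℝ) : Prop := ∀ n : ℕ, l = (n : WithBot ℕ) → (n : ℝ) < r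

/-- The LU-preorder `ν' ≼_{LU} ν`: for each clock `x`, either `ν' x = ν x`,
or `L x < ν' x < ν x`, or `U x < ν x < ν' x`. -/
def LUpre {X : Type*} (L U : X → WithBot ℕ) (ν' ν : Val X) : Prop :=
  ∀ x, ν' x = ν x ∨ (lbLtR (L x) (ν' x) ∧ ν' x < ν x) ∨ (lbLtR (U x) (ν x) ∧ ν x < ν' x)

/-- The abstraction `a_{≼LU}(W) = { ν | ∃ ν' ∈ W, ν' ≼_{LU} ν }` (inside the
nonnegative valuations). -/
def aLU {X : Type*} (L U : X → WithBot ℕ) (W : Set (Val X)) : Set (Val X) :=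
  { ν | Nonneg ν ∧ ∃ ν' ∈ W, LUpre L U ν' ν }

/-! ### Guards, transitions, timed automata -/

/-- Comparison operators `# ∈ {<, ≤, =, ≥, >}`. -/
inductive Cmp | lt | le | eq | ge | gt
deriving DecidableEq

/-- Satisfaction of a comparison by real numbers. -/
def Cmp.sat : Cmp → ℝ → ℝ → Prop
  | .lt, a, b => a < b
  | .le, a, b => a ≤ b
  | .eq, a, b => a = b
  | .ge, a, b => a ≥ b
  | .gt, a, b => a > b

/-- A clock constraint (guard): a conjunction (list) of constraints `x # c`, `c ∈ ℕ`. -/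
abbrev Guard (X : Type*) := List (X × Cmp × ℕ)

/-- `v ⊨ g`: every conjunct of the guard holds. -/
def gsat {X : Type*} (v : Val X) (g : Guard X) : Prop :=
  ∀ p ∈ g, Cmp.sat p.2.1 (v p.1) (p.2.2 : ℝ)

/-- `[R]v`: reset the clocks in `R` to `0`, leaving the others unchanged. -/
def resetVal {X : Type*} (R : Set X) (v : Val X) : Val X := Set.indicator Rᶜ v

/-- One step `ν →^{δ,t} ν'` for a transition with guard `g` and reset set `R`:
`ν + δ ⊨ g` and `ν' = [R](ν + δ)`. -/
def step {X : Type*} (g : Guard X) (R : Set X) (δ : ℝ) (ν ν' : Val X) : Prop :=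
  0 ≤ δ ∧ gsat (fun x => ν x + δ) g ∧ ν' = resetVal R (fun x => ν x + δ)

/-- `Post(S,t)`: all valuations reachable by the transition from valuations in `S`. -/
def Post {X : Type*} (g : Guard X) (R : Set X) (S : Set (Val X)) : Set (Val X) :=
  { ν' | ∃ ν ∈ S, ∃ δ : ℝ, step g R δ ν ν' }

/-- A timed automaton `(Q, q₀, X, T, Acc)`. -/
structure TimedAuto (Q X : Type*) where
  init : Q
  trans : Set (Q × Guard X × Set X × Q)
  acc : Set Q

/-- `(q,ν) →^{δ,t} (q',ν')` for a transition `t = (q,g,R,q')` of the automaton. -/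
def TimedAuto.cstep {Q X : Type*} (A : TimedAuto Q X) (t : Q × Guard X × Set X × Q)
    (δ : ℝ) (c c' : Q × Val X) : Prop :=
  t ∈ A.trans ∧ c.1 = t.1 ∧ c'.1 = t.2.2.2 ∧ step t.2.1 t.2.2.1 δ c.2 c'.2

/-- `m` is the least value of the edge `a → b` of the canonical distance graph of a
region (w.r.t. `α`), taken over the regions intersecting `Z`: it is attained and is a
lower bound. -/
def IsLeastEdgeVal {X : Type*} (α : X → ℕ) (Z : Set (Val X)) (a b : Vtx X)
    (m : Weight) : Prop :=
  (∃ (R : Set (Val X)) (GR : DGraph X), IsRegion α R ∧ (R ∩ Z).Nonempty ∧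
      IsCanonGraph GR R ∧ GR a b = m) ∧
  ∀ (R : Set (Val X)) (GR : DGraph X), IsRegion α R → (R ∩ Z).Nonempty →
      IsCanonGraph GR R → m.le (GR a b)


/-! ### Auxiliary lemmas for Statement 6 -/

section Aux

variable {X : Type*}

@[simp] lemma extV_none (v : Val X) : extV v none = 0 := rfl
@[simp] lemma extV_some (v : Val X) (x : X) : extV v (some x) = v x := rfl

@[simp] lemma ovLt_some_some (a b : ℤ) : ovLt (some a) (some b) ↔ a < b := Iff.rfl
@[simp] lemma ovLt_some_none (a : ℤ) : ovLt (some a) none := trivial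
@[simp] lemma ovLt_none (a : OVal) : ¬ ovLt none a := fun h => h

lemma sat_mk_some {b : Bool} {c : ℤ} {d : ℝ} :
    Weight.sat ⟨b, some c⟩ d ↔ if b then d < (c:ℝ) else d ≤ (c:ℝ) := Iff.rfl

lemma sat_mk_none (b : Bool) (d : ℝ) : Weight.sat ⟨b, none⟩ d := trivial

@[simp] lemma sat_wle {c : ℤ} {d : ℝ} : (wle c).sat d ↔ d ≤ (c:ℝ) := by
  rw [wle, sat_mk_some]; simp

@[simp] lemma sat_wlt {c : ℤ} {d : ℝ} : (wlt c).sat d ↔ d < (c:ℝ) := by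
  rw [wlt, sat_mk_some]; simp

@[simp] lemma sat_winf (d : ℝ) : winf.sat d := trivial

lemma weight_lt_asymm {a b : Weight} (h1 : a.lt b) (h2 : b.lt a) : False := by
  obtain ⟨s, va⟩ := a; obtain ⟨t, vb⟩ := b
  rcases h1 with h1 | ⟨h1, hs1, ht1⟩ <;> rcases h2 with h2 | ⟨h2, hs2, ht2⟩
  · cases va with
    | none => exact h1
    | some ca =>
      cases vb with
      | none => exact h2
      | some cb =>
        have a1 : ca < cb := h1
        have a2 : cb < ca := h2
        omega
  · cases va with
    | none => exact h1
    | some ca =>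
      cases vb with
      | none => simp at h2
      | some cb =>
        have a1 : ca < cb := h1
        injection h2 with h2
        omega
  · cases vb with
    | none => exact h2
    | some cb =>
      cases va with
      | none => simp at h1
      | some ca =>
        have a2 : cb < ca := h2
        injection h1 with h1
        omega
  · simp only at hs1 ht2
    rw [hs1] at ht2
    exact Bool.noConfusion ht2

lemma weight_le_antisymm {a b : Weight} (h1 : a.le b) (h2 : b.le a) : a = b := by
  rcases h1 with h1 | h1
  · rcases h2 with h2 | h2
    · exact absurd h2 (fun h => weight_lt_asymm h1 h)
    · exact h2.symm
  · exact h1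

lemma winf_le {w : Weight} (h : w.val = none) : winf.le w := by
  obtain ⟨t, v⟩ := w
  cases v with
  | none =>
    cases t with
    | false => exact Or.inl (Or.inr ⟨rfl, rfl, rfl⟩)
    | true => exact Or.inr rfl
  | some c => simp [Weight.val] at h

lemma weight_sat_mono {a b : Weight} (h : a.le b) {d : ℝ} (hd : a.sat d) : b.sat d := by
  rcases h with h | rfl
  · obtain ⟨s, va⟩ := a; obtain ⟨t, vb⟩ := b
    cases vb with
    | none => exact trivial
    | some cb =>
      cases va with
      | none => simp [Weight.lt, ovLt] at h
      | some ca =>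
        rw [sat_mk_some] at hd ⊢
        rcases h with h | ⟨hv, hs, ht⟩
        · have h' : (ca:ℝ) < cb := by exact_mod_cast (h : ca < cb)
          split at hd <;> split <;> linarith
        · injection hv with hv
          subst hv; subst hs; subst ht
          rw [if_pos rfl] at hd
          rw [if_neg Bool.false_ne_true]
          exact le_of_lt hd
  · exact hd

lemma wle_le_of_sat {c : ℤ} {d : ℝ} {w : Weight} (hw : w.sat d) (hd : (c:ℝ) ≤ d) :
    (wle c).le w := by
  obtain ⟨t, v⟩ := w
  cases v with
  | none => exact Or.inl (Or.inl trivial)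
  | some c' =>
    rw [sat_mk_some] at hw
    cases t with
    | true =>
      rw [if_pos rfl] at hw
      have : c < c' := by exact_mod_cast lt_of_le_of_lt hd hw
      exact Or.inl (Or.inl this)
    | false =>
      rw [if_neg Bool.false_ne_true] at hw
      have hcc : c ≤ c' := by exact_mod_cast le_trans hd hw
      rcases lt_or_eq_of_le hcc with h | h
      · exact Or.inl (Or.inl h)
      · subst h; exact Or.inr rfl

lemma wlt_le_of_sat {c : ℤ} {d : ℝ} {w : Weight} (hw : w.sat d) (hd : (c:ℝ) - 1 < d) :
    (wlt c).le w := by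
  obtain ⟨t, v⟩ := w
  cases v with
  | none => exact Or.inl (Or.inl trivial)
  | some c' =>
    rw [sat_mk_some] at hw
    have hcc : c ≤ c' := by
      have : (c:ℝ) - 1 < (c':ℝ) := by
        cases t with
        | true => rw [if_pos rfl] at hw; linarith
        | false => rw [if_neg Bool.false_ne_true] at hw; linarith
      have : (c:ℝ) < (c':ℝ) + 1 := by linarith
      have : c < c' + 1 := by exact_mod_cast this
      omega
    rcases lt_or_eq_of_le hcc with h | h
    · exact Or.inl (Or.inl h)
    · subst h
      cases t with
      | true => exact Or.inr rfl
      | false => exact Or.inl (Or.inr ⟨rfl, rfl, rfl⟩)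

lemma bounds_weaken {S : Set (Val X)} {a b : Vtx X} {t : Bool} {c : ℤ}
    (h : Bounds S a b ⟨t, some c⟩) : Bounds S a b (wle c) := by
  intro v hv
  have hs := h v hv
  rw [sat_mk_some] at hs
  rw [sat_wle]
  cases t with
  | true => rw [if_pos rfl] at hs; exact le_of_lt hs
  | false => rw [if_neg Bool.false_ne_true] at hs; exact hs

lemma exists_leastBound (S : Set (Val X)) (hS : S.Nonempty) (a b : Vtx X) :
    ∃ w, Bounds S a b w ∧ ∀ w', Bounds S a b w' → w.le w' := by
  by_cases hT : ∃ c : ℤ, Bounds S a b (wle c)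
  · obtain ⟨v₀, hv₀⟩ := hS
    have hbdd : ∃ m : ℤ, ∀ c : ℤ, Bounds S a b (wle c) → m ≤ c := by
      refine ⟨⌈extV v₀ b - extV v₀ a⌉, fun c hc => ?_⟩
      have h1 := hc v₀ hv₀
      rw [sat_wle] at h1
      exact Int.ceil_le.mpr h1
    obtain ⟨cs, hcs, hleast⟩ :=
      Int.exists_least_of_bdd (P := fun c => Bounds S a b (wle c)) hbdd hT
    by_cases hstrict : Bounds S a b (wlt cs)
    · refine ⟨wlt cs, hstrict, fun w' hw' => ?_⟩
      obtain ⟨t, v⟩ := w'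
      cases v with
      | none => exact Or.inl (Or.inl trivial)
      | some c' =>
        have hc' : cs ≤ c' := hleast c' (bounds_weaken hw')
        rcases lt_or_eq_of_le hc' with h | h
        · exact Or.inl (Or.inl h)
        · subst h
          cases t with
          | true => exact Or.inr rfl
          | false => exact Or.inl (Or.inr ⟨rfl, rfl, rfl⟩)
    · refine ⟨wle cs, hcs, fun w' hw' => ?_⟩
      obtain ⟨t, v⟩ := w'
      cases v with
      | none => exact Or.inl (Or.inl trivial)
      | some c' =>
        have hc' : cs ≤ c' := hleast c' (bounds_weaken hw')
        rcases lt_or_eq_of_le hc' with h | h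
        · exact Or.inl (Or.inl h)
        · subst h
          cases t with
          | true => exact absurd hw' hstrict
          | false => exact Or.inr rfl
  · refine ⟨winf, fun v _ => trivial, fun w' hw' => ?_⟩
    apply winf_le
    obtain ⟨t, v⟩ := w'
    cases v with
    | none => rfl
    | some c' => exact absurd ⟨c', bounds_weaken hw'⟩ hT

/-- Least bounding weight property. -/
def IsLeastBound (S : Set (Val X)) (a b : Vtx X) (w : Weight) : Prop :=
  Bounds S a b w ∧ ∀ w', Bounds S a b w' → w.le w'

/-- Canonical distance graph of a set, defined by least bounding weights. -/
noncomputable def canonG (S : Set (Val X)) : DGraph X := fun a b =>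
  if h : ∃ w, IsLeastBound S a b w then h.choose else winf

lemma canonG_spec {S : Set (Val X)} (hS : S.Nonempty) (a b : Vtx X) :
    IsLeastBound S a b (canonG S a b) := by
  have h : ∃ w, IsLeastBound S a b w := exists_leastBound S hS a b
  simp only [canonG, dif_pos h]
  exact h.choose_spec

lemma canonG_eq {S : Set (Val X)} {a b : Vtx X} {w : Weight} (h : IsLeastBound S a b w) :
    canonG S a b = w := by
  have hex : ∃ w, IsLeastBound S a b w := ⟨w, h⟩
  simp only [canonG, dif_pos hex]
  exact weight_le_antisymm (hex.choose_spec.2 w h.1) (h.2 _ hex.choose_spec.1)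

end Aux


section RegionAux

variable {X : Type*}

/-- The region (equivalence class) of `v₀` with respect to `α`. -/
def reg (α : X → ℕ) (v₀ : Val X) : Set (Val X) := { w | Nonneg w ∧ regEq α v₀ w }

lemma regEq_refl (α : X → ℕ) (v : Val X) : regEq α v v :=
  ⟨fun _ => Or.inr ⟨rfl, Iff.rfl⟩, fun _ _ _ _ => Iff.rfl⟩

lemma self_mem_reg {α : X → ℕ} {v : Val X} (hv : Nonneg v) : v ∈ reg α v :=
  ⟨hv, regEq_refl α v⟩

lemma reg_floor {α : X → ℕ} {v₀ w : Val X} (hw : w ∈ reg α v₀) {y : X}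
    (hy : v₀ y ≤ (α y : ℝ)) :
    ⌊w y⌋ = ⌊v₀ y⌋ ∧ (Int.fract (v₀ y) = 0 ↔ Int.fract (w y) = 0) := by
  rcases hw.2.1 y with ⟨h1, _⟩ | ⟨h1, h2⟩
  · exact absurd hy (not_le.mpr h1)
  · exact ⟨h1.symm, h2⟩

lemma reg_high {α : X → ℕ} {v₀ w : Val X} (hw : w ∈ reg α v₀) {y : X}
    (hy : (α y : ℝ) < v₀ y) : (α y : ℝ) < w y := by
  rcases hw.2.1 y with ⟨_, h2⟩ | ⟨h1, h2⟩
  · exact h2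
  · by_cases hf : Int.fract (v₀ y) = 0
    · have e1 := Int.floor_add_fract (v₀ y)
      have e2 := Int.floor_add_fract (w y)
      rw [hf, add_zero] at e1
      rw [h2.mp hf, add_zero] at e2
      rw [h1] at e1
      linarith [e1, e2, hy]
    · have hα : ((α y : ℕ) : ℤ) ≤ ⌊v₀ y⌋ := Int.le_floor.mpr (by exact_mod_cast hy.le)
      have hf2 : Int.fract (w y) ≠ 0 := fun h => hf (h2.mpr h)
      have hf2' : 0 < Int.fract (w y) := lt_of_le_of_ne (Int.fract_nonneg _) (Ne.symm hf2)
      have e2 := Int.floor_add_fract (w y)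
      rw [h1.symm] at e2
      have : ((α y : ℕ) : ℝ) ≤ ((⌊v₀ y⌋ : ℤ) : ℝ) := by exact_mod_cast hα
      linarith [e2]

lemma reg_val_int {α : X → ℕ} {v₀ : Val X} {y : X} (hy : v₀ y ≤ (α y : ℝ))
    (hf : Int.fract (v₀ y) = 0) {w : Val X} (hw : w ∈ reg α v₀) :
    w y = ((⌊v₀ y⌋ : ℤ) : ℝ) := by
  obtain ⟨h1, h2⟩ := reg_floor hw hy
  have e := Int.floor_add_fract (w y)
  rw [h2.mp hf, add_zero, h1] at e
  exact e.symm

lemma reg_val_frac {α : X → ℕ} {v₀ : Val X} {y : X} (hy : v₀ y ≤ (α y : ℝ))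
    (hf : Int.fract (v₀ y) ≠ 0) {w : Val X} (hw : w ∈ reg α v₀) :
    ((⌊v₀ y⌋ : ℤ) : ℝ) < w y ∧ w y < ((⌊v₀ y⌋ : ℤ) : ℝ) + 1 := by
  obtain ⟨h1, h2⟩ := reg_floor hw hy
  have hf2 : Int.fract (w y) ≠ 0 := fun h => hf (h2.mpr h)
  have hf2' : 0 < Int.fract (w y) := lt_of_le_of_ne (Int.fract_nonneg _) (Ne.symm hf2)
  have hf3 : Int.fract (w y) < 1 := Int.fract_lt_one _
  have e := Int.floor_add_fract (w y)
  rw [h1] at e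
  constructor <;> linarith [e]

lemma bounds_reg_int {α : X → ℕ} {v₀ : Val X} {y : X} (hy : v₀ y ≤ (α y : ℝ))
    (hf : Int.fract (v₀ y) = 0) :
    Bounds (reg α v₀) none (some y) (wle ⌊v₀ y⌋) ∧
    Bounds (reg α v₀) (some y) none (wle (-⌊v₀ y⌋)) := by
  constructor <;> intro w hw <;>
    rw [sat_wle] <;> rw [extV_some, extV_none] <;>
    rw [reg_val_int hy hf hw] <;> push_cast <;> linarith

lemma bounds_reg_frac {α : X → ℕ} {v₀ : Val X} {y : X} (hy : v₀ y ≤ (α y : ℝ))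
    (hf : Int.fract (v₀ y) ≠ 0) :
    Bounds (reg α v₀) none (some y) (wlt (⌊v₀ y⌋ + 1)) ∧
    Bounds (reg α v₀) (some y) none (wlt (-⌊v₀ y⌋)) := by
  constructor <;> intro w hw <;>
    rw [sat_wlt] <;> rw [extV_some, extV_none] <;>
    obtain ⟨l1, l2⟩ := reg_val_frac hy hf hw <;> push_cast <;> push_cast at l1 l2 <;> linarith

lemma bounds_reg_high {α : X → ℕ} {v₀ : Val X} {y : X} (hy : (α y : ℝ) < v₀ y) :
    Bounds (reg α v₀) (some y) none (wlt (-((α y : ℕ) : ℤ))) := by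
  intro w hw
  have := reg_high hw hy
  rw [sat_wlt, extV_none, extV_some]
  push_cast
  linarith

lemma bounds_reg_pair_le {α : X → ℕ} {v₀ : Val X} {a b : X} (ha : v₀ a ≤ (α a : ℝ))
    (hb : v₀ b ≤ (α b : ℝ)) (hfr : Int.fract (v₀ a) ≤ Int.fract (v₀ b)) :
    Bounds (reg α v₀) (some b) (some a) (wle (⌊v₀ a⌋ - ⌊v₀ b⌋)) := by
  intro w hw
  have hfr' : Int.fract (w a) ≤ Int.fract (w b) := (hw.2.2 a b ha hb).mp hfr
  have e1 := Int.floor_add_fract (w a)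
  have e2 := Int.floor_add_fract (w b)
  rw [(reg_floor hw ha).1] at e1
  rw [(reg_floor hw hb).1] at e2
  rw [sat_wle, extV_some, extV_some]
  push_cast
  push_cast at e1 e2
  linarith

lemma bounds_reg_pair_lt {α : X → ℕ} {v₀ : Val X} {a b : X} (ha : v₀ a ≤ (α a : ℝ))
    (hb : v₀ b ≤ (α b : ℝ)) (hfr : ¬ Int.fract (v₀ a) ≤ Int.fract (v₀ b)) :
    Bounds (reg α v₀) (some a) (some b) (wlt (⌊v₀ b⌋ - ⌊v₀ a⌋)) := by
  intro w hw
  have hfr' : Int.fract (w b) < Int.fract (w a) :=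
    not_le.mp (fun h => hfr ((hw.2.2 a b ha hb).mpr h))
  have e1 := Int.floor_add_fract (w a)
  have e2 := Int.floor_add_fract (w b)
  rw [(reg_floor hw ha).1] at e1
  rw [(reg_floor hw hb).1] at e2
  rw [sat_wlt, extV_some, extV_some]
  push_cast
  push_cast at e1 e2
  linarith

/-- Key lemma: a nonnegative valuation satisfying every bounding weight of the
region of `v₀` belongs to that region. -/
lemma mem_reg_of_sats {α : X → ℕ} {v₀ v : Val X} (hnn : Nonneg v)
    (hsat : ∀ a b w, Bounds (reg α v₀) a b w → w.sat (extV v b - extV v a)) :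
    v ∈ reg α v₀ := by
  have hfl : ∀ z, v₀ z ≤ (α z : ℝ) →
      ⌊v z⌋ = ⌊v₀ z⌋ ∧ (Int.fract (v₀ z) = 0 ↔ Int.fract (v z) = 0) := by
    intro z hz
    by_cases hf : Int.fract (v₀ z) = 0
    · obtain ⟨b1, b2⟩ := bounds_reg_int hz hf
      have h1 := hsat _ _ _ b1
      have h2 := hsat _ _ _ b2
      rw [sat_wle, extV_some, extV_none] at h1
      rw [sat_wle, extV_some, extV_none] at h2
      push_cast at h1 h2
      have hv : v z = ((⌊v₀ z⌋ : ℤ) : ℝ) := by linarith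
      constructor
      · rw [hv, Int.floor_intCast]
      · rw [hv, Int.fract_intCast]
        simp [hf]
    · obtain ⟨b1, b2⟩ := bounds_reg_frac hz hf
      have h1 := hsat _ _ _ b1
      have h2 := hsat _ _ _ b2
      rw [sat_wlt, extV_some, extV_none] at h1
      rw [sat_wlt, extV_some, extV_none] at h2
      push_cast at h1 h2
      have hfloor : ⌊v z⌋ = ⌊v₀ z⌋ := by
        rw [Int.floor_eq_iff]
        constructor <;> [linarith; linarith]
      constructor
      · exact hfloor
      · constructor
        · intro h; exact absurd h hf
        · intro h
          exfalso
          have e := Int.floor_add_fract (v z)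
          rw [h, add_zero, hfloor] at e
          linarith [e]
  refine ⟨hnn, fun z => ?_, fun a b ha hb => ?_⟩
  · by_cases hz : v₀ z ≤ (α z : ℝ)
    · obtain ⟨h1, h2⟩ := hfl z hz
      exact Or.inr ⟨h1.symm, h2⟩
    · push_neg at hz
      have h := hsat _ _ _ (bounds_reg_high hz)
      rw [sat_wlt, extV_none, extV_some] at h
      push_cast at h
      exact Or.inl ⟨hz, by linarith⟩
  · have fa := hfl a ha
    have fb := hfl b hb
    have ea := Int.floor_add_fract (v a)
    have eb := Int.floor_add_fract (v b)
    rw [fa.1] at ea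
    rw [fb.1] at eb
    constructor
    · intro hab
      have h := hsat _ _ _ (bounds_reg_pair_le ha hb hab)
      rw [sat_wle, extV_some, extV_some] at h
      push_cast at h ea eb
      linarith
    · intro hab
      by_contra hn
      have h := hsat _ _ _ (bounds_reg_pair_lt ha hb hn)
      rw [sat_wlt, extV_some, extV_some] at h
      push_cast at h ea eb
      linarith

lemma update_mem_reg {α : X → ℕ} {v₀ v : Val X} (hv : v ∈ reg α v₀) {x : X}
    (hx : (α x : ℝ) < v x) {M : ℝ} (hM : v x ≤ M) :
    Function.update v x M ∈ reg α v₀ := by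
  have hx0 : (α x : ℝ) < v₀ x := by
    rcases hv.2.1 x with ⟨h1, _⟩ | ⟨h1, h2⟩
    · exact h1
    · by_cases hf : Int.fract (v x) = 0
      · have e1 := Int.floor_add_fract (v x)
        have e2 := Int.floor_add_fract (v₀ x)
        rw [hf, add_zero] at e1
        rw [h2.mpr hf, add_zero] at e2
        rw [h1] at e2
        linarith [e1, e2]
      · have hα : ((α x : ℕ) : ℤ) ≤ ⌊v x⌋ := Int.le_floor.mpr (by exact_mod_cast hx.le)
        have hf0 : 0 < Int.fract (v₀ x) :=
          lt_of_le_of_ne (Int.fract_nonneg _) (Ne.symm (fun h => hf (h2.mp h)))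
        have e2 := Int.floor_add_fract (v₀ x)
        rw [h1] at e2
        have : ((α x : ℕ) : ℝ) ≤ ((⌊v x⌋ : ℤ) : ℝ) := by exact_mod_cast hα
        linarith [e2]
  refine ⟨fun z => ?_, fun z => ?_, fun a b ha hb => ?_⟩
  · by_cases hzx : z = x
    · subst hzx
      rw [Function.update_self]
      exact le_trans (hv.1 z) hM
    · rw [Function.update_of_ne hzx]
      exact hv.1 z
  · by_cases hzx : z = x
    · subst hzx
      rw [Function.update_self]
      exact Or.inl ⟨hx0, by linarith⟩
    · rw [Function.update_of_ne hzx]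
      exact hv.2.1 z
  · have hax : a ≠ x := fun h => absurd ha (by rw [h]; exact not_le.mpr hx0)
    have hbx : b ≠ x := fun h => absurd hb (by rw [h]; exact not_le.mpr hx0)
    rw [Function.update_of_ne hax, Function.update_of_ne hbx]
    exact hv.2.2 a b ha hb

lemma bounds_val_none {α : X → ℕ} {v₀ v : Val X} (hv : v ∈ reg α v₀) {x : X}
    (hx : (α x : ℝ) < v x) {w : Weight} (hw : Bounds (reg α v₀) none (some x) w) :
    w.val = none := by
  obtain ⟨t, val⟩ := w
  cases val with
  | none => rfl
  | some c =>
    exfalso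
    have hM : v x ≤ max (v x) ((c : ℝ) + 1) := le_max_left _ _
    have hmem := update_mem_reg hv hx hM
    have hs := hw _ hmem
    rw [extV_some, extV_none, sub_zero, Function.update_self, sat_mk_some] at hs
    have hM2 : (c : ℝ) + 1 ≤ max (v x) ((c : ℝ) + 1) := le_max_right _ _
    cases t with
    | true => rw [if_pos rfl] at hs; linarith
    | false => rw [if_neg Bool.false_ne_true] at hs; linarith

lemma canonG_isCanon {α : X → ℕ} {v₀ : Val X} (h₀ : Nonneg v₀) :
    IsCanonGraph (canonG (reg α v₀)) (reg α v₀) := by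
  have hne : (reg α v₀).Nonempty := ⟨v₀, self_mem_reg h₀⟩
  constructor
  · ext v
    simp only [sem, Set.mem_setOf_eq]
    constructor
    · rintro ⟨hnn, hsat⟩
      exact mem_reg_of_sats hnn (fun a b w hw =>
        weight_sat_mono ((canonG_spec hne a b).2 w hw) (hsat a b))
    · intro hv
      exact ⟨hv.1, fun a b => (canonG_spec hne a b).1 v hv⟩
  · intro a b w hw
    exact (canonG_spec hne a b).2 w hw

end RegionAux

/-- Among the regions intersecting a non-empty zone `Z`, the least
value of `R_{0x}` is `(<,∞)` if `Z_{x0} < (≤,−α_x)`, and `⌈−Z_{x0}⌉` otherwise. -/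
theorem stmt6 {X : Type*} [Fintype X] (α : X → ℕ) (Z : Set (Val X))
    (hZ : IsZone Z) (hne : Z.Nonempty) (G : DGraph X) (hG : IsCanonGraph G Z)
    (x : X) :
    IsLeastEdgeVal α Z none (some x)
      (if (G (some x) none).lt (wle (-(α x : ℤ))) then winf
       else (G (some x) none).neg.ceil) := by
  obtain ⟨hsemG, hminG⟩ := hG
  have hZnn : ∀ v ∈ Z, Nonneg v := by
    intro v hv
    rw [← hsemG] at hv
    exact hv.1
  have hZsat : ∀ v ∈ Z, (G (some x) none).sat (0 - v x) := by
    intro v hv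
    rw [← hsemG] at hv
    have h := hv.2 (some x) none
    rwa [extV_none, extV_some] at h
  have hb0 : Bounds Z (some x) none (wle 0) := by
    intro v hv
    rw [sat_wle, extV_none, extV_some]
    have := hZnn v hv x
    push_cast
    linarith
  have hle0 := hminG _ _ _ hb0
  obtain ⟨bb, c, hxc⟩ : ∃ bb cc, G (some x) none = ⟨bb, some cc⟩ := by
    rcases hw : G (some x) none with ⟨bb, _ | cc⟩
    · exfalso
      rw [hw] at hle0
      rcases hle0 with (h | ⟨h, -⟩) | h
      · exact h
      · simp [wle] at h
      · rw [wle] at h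
        injection h with h1 h2
        simp at h2
    · exact ⟨bb, cc, rfl⟩
  by_cases h : (G (some x) none).lt (wle (-(α x : ℤ)))
  · rw [if_pos h]
    have hhigh : ∀ v ∈ Z, (α x : ℝ) < v x := by
      intro v hv
      have hs := hZsat v hv
      rw [hxc, sat_mk_some] at hs
      rw [hxc] at h
      have hcle : (0 : ℝ) - v x ≤ (c : ℝ) := by
        cases bb with
        | true => rw [if_pos rfl] at hs; linarith
        | false => rw [if_neg Bool.false_ne_true] at hs; linarith
      rcases h with h | ⟨hv2, hs2, -⟩
      · have hcα : c < -((α x : ℕ) : ℤ) := h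
        have : (c : ℝ) < -((α x : ℕ) : ℝ) := by exact_mod_cast hcα
        linarith
      · rw [wle] at hv2
        have hv2' : (⟨bb, some c⟩ : Weight).val = some (-((α x : ℕ) : ℤ)) := hv2
        have hv3 : c = -((α x : ℕ) : ℤ) := Option.some.inj hv2'
        have hs' : (0 : ℝ) - v x < (c : ℝ) := by
          have hbb : bb = true := hs2
          rw [hbb, if_pos rfl] at hs
          exact hs
        rw [hv3] at hs'
        push_cast at hs'
        linarith
    constructor
    · obtain ⟨v, hv⟩ := hne
      have hnn := hZnn v hv
      have hvreg := self_mem_reg (α := α) hnn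
      refine ⟨reg α v, canonG (reg α v), ⟨v, hnn, rfl⟩, ⟨v, hvreg, hv⟩,
        canonG_isCanon hnn, ?_⟩
      apply canonG_eq
      exact ⟨fun w _ => trivial,
        fun w' hw' => winf_le (bounds_val_none hvreg (hhigh v hv) hw')⟩
    · intro R GR hR hRZ hGR
      obtain ⟨v₀, hnn0, hReq⟩ := hR
      obtain ⟨v, hvR, hvZ⟩ := hRZ
      have hRR : R = reg α v₀ := hReq
      have hvreg : v ∈ reg α v₀ := by rw [← hRR]; exact hvR
      apply winf_le
      apply bounds_val_none hvreg (hhigh v hvZ)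
      intro w hw
      have hwR : w ∈ sem GR := by rw [hGR.1, hRR]; exact hw
      exact hwR.2 none (some x)
  · rw [if_neg h]
    rw [hxc] at h ⊢
    cases bb with
    | false =>
      have hm : (Weight.neg ⟨false, some c⟩).ceil = wle (-c) := by
        simp [Weight.neg, Weight.ceil, wle]
      rw [hm]
      have hlb : ∀ v ∈ Z, (-(c : ℝ)) ≤ v x := by
        intro v hv
        have hs := hZsat v hv
        rw [hxc, sat_mk_some, if_neg Bool.false_ne_true] at hs
        linarith
      have hcα : -((α x : ℕ) : ℤ) ≤ c := by
        by_contra hc2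
        push_neg at hc2
        exact h (Or.inl hc2)
      have hnb : ¬ Bounds Z (some x) none (wlt c) := by
        intro hb
        have hle := hminG _ _ _ hb
        rw [hxc] at hle
        rcases hle with (hl | ⟨-, hs, -⟩) | he
        · exact absurd (hl : c < c) (lt_irrefl c)
        · exact Bool.noConfusion hs
        · rw [wlt] at he
          injection he with h1 h2
          exact Bool.noConfusion h1
      rw [Bounds] at hnb
      push_neg at hnb
      obtain ⟨v, hvZ, hvs⟩ := hnb
      rw [sat_wlt, extV_none, extV_some] at hvs
      push_neg at hvs
      have hvx : v x = ((-c : ℤ) : ℝ) := by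
        have h1 := hlb v hvZ
        push_cast
        push_cast at h1 hvs
        linarith
      have hnn := hZnn v hvZ
      have hvreg := self_mem_reg (α := α) hnn
      have hy : v x ≤ ((α x : ℕ) : ℝ) := by
        rw [hvx]
        have : ((-c : ℤ) : ℝ) ≤ (((α x : ℕ) : ℤ) : ℝ) := by exact_mod_cast (by omega : -c ≤ ((α x : ℕ) : ℤ))
        push_cast at this ⊢
        linarith
      have hfl : ⌊v x⌋ = -c := by rw [hvx, Int.floor_intCast]
      have hfr : Int.fract (v x) = 0 := by rw [hvx, Int.fract_intCast]
      constructor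
      · refine ⟨reg α v, canonG (reg α v), ⟨v, hnn, rfl⟩, ⟨v, hvreg, hvZ⟩,
          canonG_isCanon hnn, ?_⟩
        apply canonG_eq
        constructor
        · have hb := (bounds_reg_int hy hfr).1
          rwa [hfl] at hb
        · intro w' hw'
          have hs := hw' v hvreg
          rw [extV_some, extV_none] at hs
          refine wle_le_of_sat hs ?_
          rw [hvx]
          push_cast
          linarith
      · intro R GR hR hRZ hGR
        obtain ⟨v', hvR', hvZ'⟩ := hRZ
        have hsem' : v' ∈ sem GR := by rw [hGR.1]; exact hvR'
        have hs' := hsem'.2 none (some x)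
        rw [extV_some, extV_none] at hs'
        refine wle_le_of_sat hs' ?_
        have := hlb v' hvZ'
        push_cast
        linarith
    | true =>
      have hm : (Weight.neg ⟨true, some c⟩).ceil = wlt (-c + 1) := by
        simp [Weight.neg, Weight.ceil, wlt]
      rw [hm]
      have hlb : ∀ v ∈ Z, (-(c : ℝ)) < v x := by
        intro v hv
        have hs := hZsat v hv
        rw [hxc, sat_mk_some, if_pos rfl] at hs
        linarith
      have hcα : -((α x : ℕ) : ℤ) < c := by
        by_contra hc2
        push_neg at hc2
        rcases lt_or_eq_of_le hc2 with h2 | h2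
        · exact h (Or.inl h2)
        · exact h (Or.inr ⟨by simp [h2, wle], rfl, rfl⟩)
      have hnb : ¬ Bounds Z (some x) none (wle (c - 1)) := by
        intro hb
        have hle := hminG _ _ _ hb
        rw [hxc] at hle
        rcases hle with (hl | ⟨hveq, -, hs⟩) | he
        · have hl' : c < c - 1 := hl
          omega
        · have hveq' : some c = some (c - 1) := hveq
          have h1 := Option.some.inj hveq'
          omega
        · have h1 : true = false := congrArg Weight.strict he
          exact Bool.noConfusion h1
      rw [Bounds] at hnb
      push_neg at hnb
      obtain ⟨v, hvZ, hvs⟩ := hnb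
      rw [sat_wle, extV_none, extV_some] at hvs
      push_neg at hvs
      have hvx1 : ((-c : ℤ) : ℝ) < v x := by push_cast; linarith [hlb v hvZ]
      have hvx2 : v x < ((-c : ℤ) : ℝ) + 1 := by push_cast; push_cast at hvs; linarith
      have hnn := hZnn v hvZ
      have hvreg := self_mem_reg (α := α) hnn
      have hy : v x ≤ ((α x : ℕ) : ℝ) := by
        have h1 : ((-c + 1 : ℤ) : ℝ) ≤ (((α x : ℕ) : ℤ) : ℝ) := by
          exact_mod_cast (by omega : -c + 1 ≤ ((α x : ℕ) : ℤ))
        have h2 := hvx2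
        push_cast at h1 h2 ⊢
        linarith
      have hfl : ⌊v x⌋ = -c := by
        rw [Int.floor_eq_iff]
        constructor
        · exact le_of_lt hvx1
        · exact hvx2
      have hfr : Int.fract (v x) ≠ 0 := by
        have e := Int.self_sub_floor (v x)
        rw [hfl] at e
        have : 0 < Int.fract (v x) := by rw [← e]; push_cast; push_cast at hvx1; linarith
        exact ne_of_gt this
      constructor
      · refine ⟨reg α v, canonG (reg α v), ⟨v, hnn, rfl⟩, ⟨v, hvreg, hvZ⟩,
          canonG_isCanon hnn, ?_⟩
        apply canonG_eq
        constructor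
        · have hb := (bounds_reg_frac hy hfr).1
          rwa [hfl] at hb
        · intro w' hw'
          have hs := hw' v hvreg
          rw [extV_some, extV_none] at hs
          refine wlt_le_of_sat hs ?_
          push_cast
          push_cast at hvx1
          linarith
      · intro R GR hR hRZ hGR
        obtain ⟨v', hvR', hvZ'⟩ := hRZ
        have hsem' : v' ∈ sem GR := by rw [hGR.1]; exact hvR'
        have hs' := hsem'.2 none (some x)
        rw [extV_some, extV_none] at hs'
        refine wlt_le_of_sat hs' ?_
        have := hlb v' hvZ'
        push_cast
        linarith

end TAform

end
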